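/- Let D = ℂ(x)[τ] and L₁, L₂ ∈ D. The map Ψ : Hom_D(D/DL₁, D/DL₂) → Hom_ℂ(V(L₂), V(L₁)) sending a D-module homomorphism φ to the ℂ-linear map on solution spaces induced by any operator G with φ(1 + DL₁) = G + DL₂ is well defined and injective. -/

import Mathlib

open Polynomial

noncomputable section

/-- The ring of complex-valued sequences. -/
abbrev CSeq := ℕ → ℂ

/-- The ideal of sequences that are nonzero at only finitely many indices. -/
def finIdeal : Ideal CSeq where
  carrier := {u | (Function.support u).Finite}
  add_mem' := by
    intro u v hu hv
    exact (hu.union hv).subset (Function.support_add _ _)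
  zero_mem' := by simp [Function.support_zero]
  smul_mem' := by
    intro c u hu
    refine hu.subset ?_
    intro x hx
    simp only [Function.mem_support] at hx ⊢
    intro h0
    exact hx (by simp [Pi.smul_apply, smul_eq_mul, h0])

/-- `S = ℂ^ℕ/∼`, sequences modulo those with finite support. -/
abbrev SeqQ := CSeq ⧸ finIdeal

/-- The shift on sequences. -/
def shiftHom : CSeq →+* CSeq where
  toFun u := fun n => u (n + 1)
  map_one' := rfl
  map_mul' _ _ := rfl
  map_zero' := rfl
  map_add' _ _ := rfl

lemma shift_mem (u : CSeq) (hu : u ∈ finIdeal) : shiftHom u ∈ finIdeal := by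
  have : Function.support (shiftHom u) ⊆ (fun n => n + 1) ⁻¹' Function.support u := by
    intro x hx; exact hx
  exact (hu.preimage (fun a _ b _ h => by omega)).subset this

/-- The shift operator `τ` on `S`, as a ring homomorphism. -/
def tauHom : SeqQ →+* SeqQ :=
  Ideal.Quotient.lift finIdeal ((Ideal.Quotient.mk finIdeal).comp shiftHom)
    (fun u hu => by
      show Ideal.Quotient.mk finIdeal (shiftHom u) = 0
      exact Ideal.Quotient.eq_zero_iff_mem.mpr (shift_mem u hu))

/-- The shift operator `τ` on `S`, as a `ℂ`-linear endomorphism. -/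
def tauL : Module.End ℂ SeqQ where
  toFun := tauHom
  map_add' := map_add _
  map_smul' c x := by
    obtain ⟨u, rfl⟩ := Ideal.Quotient.mk_surjective x
    rfl

/-- Evaluation of a rational function along `ℕ` (junk value `0` at poles). -/
def evalRF (f : RatFunc ℂ) : CSeq := fun n => f.eval (RingHom.id ℂ) (n : ℂ)

/-- The image of a rational function in `S`. -/
def embRF (f : RatFunc ℂ) : SeqQ := Ideal.Quotient.mk _ (evalRF f)

/-- Multiplication by (the image in `S` of) a rational function. -/
def mulOp (f : RatFunc ℂ) : Module.End ℂ SeqQ := LinearMap.mulLeft ℂ (embRF f)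

/-- The substitution `x ↦ x + 1` on rational functions. -/
def sigmaRF (f : RatFunc ℂ) : RatFunc ℂ :=
  algebraMap (Polynomial ℂ) (RatFunc ℂ) (f.num.comp (X + 1)) /
    algebraMap (Polynomial ℂ) (RatFunc ℂ) (f.denom.comp (X + 1))

/-- The difference operator `Σ aᵢ τ^i` acting on `S`. -/
def applyOp {n : ℕ} (a : Fin (n + 1) → RatFunc ℂ) : Module.End ℂ SeqQ :=
  ∑ i : Fin (n + 1), mulOp (a i) * tauL ^ (i : ℕ)

/-- The elements of `End(S)` that are difference operators, i.e. members of `D = ℂ(x)[τ]`. -/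
def IsDiffOp (L : Module.End ℂ SeqQ) : Prop :=
  ∃ (n : ℕ) (a : Fin (n + 1) → RatFunc ℂ), L = applyOp a

/-! ### Auxiliary development -/

open Filter

local notation "mkq" => Ideal.Quotient.mk finIdeal

lemma eventually_poly_ne {p : Polynomial ℂ} (hp : p ≠ 0) :
    ∀ᶠ n : ℕ in atTop, p.eval (n : ℂ) ≠ 0 := by
  have h : {x : ℂ | p.IsRoot x}.Finite := p.finite_setOf_isRoot hp
  have h2 : {n : ℕ | p.eval (n : ℂ) = 0}.Finite := by
    have := h.preimage (f := (Nat.cast : ℕ → ℂ))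
      (Set.injOn_of_injective Nat.cast_injective)
    exact this.subset (fun n hn => hn)
  obtain ⟨N, hN⟩ := h2.bddAbove
  filter_upwards [eventually_gt_atTop N] with n hn hcon
  exact absurd (hN hcon) (by omega)

lemma mk_eq_of_eventually {u v : CSeq} (h : ∀ᶠ n in atTop, u n = v n) :
    mkq u = mkq v := by
  rw [Ideal.Quotient.eq]
  obtain ⟨N, hN⟩ := eventually_atTop.mp h
  refine Set.Finite.subset (Set.finite_Iio N) ?_
  intro x hx
  simp only [Set.mem_Iio]
  by_contra hc
  exact hx (sub_eq_zero.mpr (hN x (by omega)))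

lemma mk_eq_zero_of_eventually {u : CSeq} (h : ∀ᶠ n in atTop, u n = 0) :
    mkq u = 0 := by
  have h2 : mkq u = mkq (0 : CSeq) := mk_eq_of_eventually h
  rwa [map_zero] at h2

lemma evalRF_def (f : RatFunc ℂ) (n : ℕ) :
    evalRF f n = f.num.eval (n : ℂ) / f.denom.eval (n : ℂ) := rfl

lemma eval2_id (p : Polynomial ℂ) (x : ℂ) : p.eval₂ (RingHom.id ℂ) x = p.eval x := rfl

lemma ev_mul (f g : RatFunc ℂ) :
    ∀ᶠ n : ℕ in atTop, evalRF (f * g) n = evalRF f n * evalRF g n := by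
  filter_upwards [eventually_poly_ne f.denom_ne_zero, eventually_poly_ne g.denom_ne_zero]
    with n h1 h2
  exact RatFunc.eval_mul _ _ (by simpa [eval2_id] using h1) (by simpa [eval2_id] using h2)

lemma ev_add (f g : RatFunc ℂ) :
    ∀ᶠ n : ℕ in atTop, evalRF (f + g) n = evalRF f n + evalRF g n := by
  filter_upwards [eventually_poly_ne f.denom_ne_zero, eventually_poly_ne g.denom_ne_zero]
    with n h1 h2
  exact RatFunc.eval_add _ _ (by simpa [eval2_id] using h1) (by simpa [eval2_id] using h2)

lemma embRF_zero : embRF 0 = 0 := by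
  have : evalRF (0 : RatFunc ℂ) = (0 : CSeq) := by
    funext n; simp [evalRF]
  simp [embRF, this]

lemma embRF_add (f g : RatFunc ℂ) : embRF (f + g) = embRF f + embRF g := by
  have : (mkq (evalRF f)) + (mkq (evalRF g)) = mkq (evalRF f + evalRF g) := by
    rw [← map_add]
  rw [embRF, embRF, embRF, this]
  exact mk_eq_of_eventually (by filter_upwards [ev_add f g] with n h; simpa using h)

lemma embRF_mul (f g : RatFunc ℂ) : embRF (f * g) = embRF f * embRF g := by
  have : (mkq (evalRF f)) * (mkq (evalRF g)) = mkq (evalRF f * evalRF g) := by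
    rw [← map_mul]
  rw [embRF, embRF, embRF, this]
  exact mk_eq_of_eventually (by filter_upwards [ev_mul f g] with n h; simpa using h)

lemma embRF_neg (f : RatFunc ℂ) : embRF (-f) = - embRF f := by
  have h : embRF f + embRF (-f) = 0 := by
    rw [← embRF_add]; simp [embRF_zero]
  linear_combination h

lemma embRF_sub (f g : RatFunc ℂ) : embRF (f - g) = embRF f - embRF g := by
  rw [sub_eq_add_neg, embRF_add, embRF_neg, sub_eq_add_neg]

lemma mulOp_apply (f : RatFunc ℂ) (u : CSeq) :
    mulOp f (mkq u) = mkq (evalRF f * u) := by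
  show embRF f * mkq u = _
  rw [embRF, ← map_mul]

lemma mulOp_zero : mulOp 0 = 0 := by
  rw [mulOp, embRF_zero]
  exact LinearMap.mulLeft_zero_eq_zero ℂ SeqQ

lemma mulOp_add (f g : RatFunc ℂ) : mulOp (f + g) = mulOp f + mulOp g := by
  apply LinearMap.ext; intro x
  simp [mulOp, embRF_add, add_mul]

lemma mulOp_sub (f g : RatFunc ℂ) : mulOp (f - g) = mulOp f - mulOp g := by
  apply LinearMap.ext; intro x
  simp [mulOp, embRF_sub, sub_mul]

lemma mulOp_mul (f g : RatFunc ℂ) : mulOp (f * g) = mulOp f * mulOp g := by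
  rw [mulOp, mulOp, mulOp, embRF_mul, LinearMap.mulLeft_mul, Module.End.mul_eq_comp]

lemma End_ext {A B : Module.End ℂ SeqQ}
    (h : ∀ u : CSeq, A (mkq u) = B (mkq u)) : A = B := by
  apply LinearMap.ext; intro x
  obtain ⟨u, rfl⟩ := Ideal.Quotient.mk_surjective x
  exact h u

lemma tau_apply (u : CSeq) : tauL (mkq u) = mkq (fun n => u (n + 1)) := rfl

lemma tau_pow_apply (j : ℕ) : ∀ u : CSeq,
    (tauL ^ j) (mkq u) = mkq (fun n => u (n + j)) := by
  induction j with
  | zero => intro u; simp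
  | succ j ih =>
    intro u
    rw [pow_succ, Module.End.mul_apply, tau_apply, ih]
    exact congrArg _ (funext fun n => congrArg u (by omega))

lemma comp_X_add_one_ne_zero {p : Polynomial ℂ} (hp : p ≠ 0) :
    p.comp (Polynomial.X + 1) ≠ 0 := by
  intro h
  rcases Polynomial.comp_eq_zero_iff.mp h with h' | ⟨_, h'⟩
  · exact hp h'
  · have := congrArg (fun q => Polynomial.coeff q 1) h'
    simp [Polynomial.coeff_one] at this

lemma sigma_eval (f : RatFunc ℂ) :
    ∀ᶠ n : ℕ in atTop, evalRF (sigmaRF f) n = evalRF f (n + 1) := by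
  rcases eq_or_ne f 0 with rfl | hf
  · have : sigmaRF 0 = 0 := by
      simp [sigmaRF]
    rw [this]
    filter_upwards with n
    simp [evalRF]
  · set p := f.num with hp
    set q := f.denom with hq
    have hq0 : q ≠ 0 := f.denom_ne_zero
    have hqc : q.comp (Polynomial.X + 1) ≠ 0 := comp_X_add_one_ne_zero hq0
    have key : sigmaRF f * algebraMap (Polynomial ℂ) (RatFunc ℂ) (q.comp (Polynomial.X + 1))
        = algebraMap (Polynomial ℂ) (RatFunc ℂ) (p.comp (Polynomial.X + 1)) := by
      rw [sigmaRF]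
      exact div_mul_cancel₀ _ (RatFunc.algebraMap_ne_zero hqc)
    have hsd : (sigmaRF f).denom ≠ 0 := (sigmaRF f).denom_ne_zero
    filter_upwards [eventually_poly_ne hsd, eventually_poly_ne hqc] with n h1 h2
    have hqn1 : q.eval ((n : ℂ) + 1) ≠ 0 := by
      intro h
      apply h2
      rw [Polynomial.eval_comp]
      simpa using h
    have e1 : RatFunc.eval (RingHom.id ℂ) (n : ℂ)
          (sigmaRF f * algebraMap (Polynomial ℂ) (RatFunc ℂ) (q.comp (Polynomial.X + 1)))
        = evalRF (sigmaRF f) n * q.eval ((n : ℂ) + 1) := by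
      rw [RatFunc.eval_mul _ _ (by simpa [eval2_id] using h1)
        (by rw [RatFunc.denom_algebraMap]; simp)]
      congr 1
      rw [RatFunc.eval_algebraMap]
      simp [eval2_id, Polynomial.eval_comp]
    have e2 : RatFunc.eval (RingHom.id ℂ) (n : ℂ)
          (algebraMap (Polynomial ℂ) (RatFunc ℂ) (p.comp (Polynomial.X + 1)))
        = p.eval ((n : ℂ) + 1) := by
      rw [RatFunc.eval_algebraMap]
      simp [eval2_id, Polynomial.eval_comp]
    have e3 : evalRF (sigmaRF f) n * q.eval ((n : ℂ) + 1) = p.eval ((n : ℂ) + 1) := by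
      rw [← e1, ← e2, key]
    have : evalRF f (n + 1) = p.eval ((n : ℂ) + 1) / q.eval ((n : ℂ) + 1) := by
      rw [evalRF_def]
      push_cast
      rfl
    rw [this, eq_div_iff hqn1, e3]

lemma sigma_ne_zero {f : RatFunc ℂ} (hf : f ≠ 0) : sigmaRF f ≠ 0 := by
  rw [sigmaRF]
  apply div_ne_zero
  · exact RatFunc.algebraMap_ne_zero
      (comp_X_add_one_ne_zero (RatFunc.num_ne_zero hf))
  · exact RatFunc.algebraMap_ne_zero (comp_X_add_one_ne_zero f.denom_ne_zero)

lemma sigma_iter_ne_zero {f : RatFunc ℂ} (hf : f ≠ 0) (j : ℕ) : sigmaRF^[j] f ≠ 0 := by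
  induction j generalizing f with
  | zero => simpa
  | succ j ih =>
    rw [Function.iterate_succ_apply]
    exact ih (sigma_ne_zero hf)

lemma tau_mulOp (f : RatFunc ℂ) : tauL * mulOp f = mulOp (sigmaRF f) * tauL := by
  apply End_ext; intro u
  rw [Module.End.mul_apply, Module.End.mul_apply, mulOp_apply, tau_apply, tau_apply,
    mulOp_apply]
  apply mk_eq_of_eventually
  filter_upwards [sigma_eval f] with n h
  show evalRF f (n + 1) * u (n + 1) = evalRF (sigmaRF f) n * u (n + 1)
  rw [h]

lemma tau_pow_mulOp (j : ℕ) : ∀ f : RatFunc ℂ,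
    tauL ^ j * mulOp f = mulOp (sigmaRF^[j] f) * tauL ^ j := by
  induction j with
  | zero => intro f; simp
  | succ j ih =>
    intro f
    rw [pow_succ, Function.iterate_succ_apply, mul_assoc (tauL ^ j) tauL (mulOp f),
      tau_mulOp, ← mul_assoc, ih (sigmaRF f), mul_assoc]

/-- Operators given by coefficient functions on `ℕ`. -/
def opN (c : ℕ → RatFunc ℂ) (k : ℕ) : Module.End ℂ SeqQ :=
  ∑ i ∈ Finset.range k, mulOp (c i) * tauL ^ i

lemma opN_apply (c : ℕ → RatFunc ℂ) (k : ℕ) (u : CSeq) :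
    opN c k (mkq u) = mkq (fun n => ∑ i ∈ Finset.range k, evalRF (c i) n * u (n + i)) := by
  rw [opN, LinearMap.sum_apply]
  have : ∀ i ∈ Finset.range k,
      (mulOp (c i) * tauL ^ i) (mkq u) = mkq (fun n => evalRF (c i) n * u (n + i)) := by
    intro i _
    rw [Module.End.mul_apply, tau_pow_apply, mulOp_apply]
    rfl
  rw [Finset.sum_congr rfl this, ← map_sum]
  congr 1
  funext n
  simp

lemma opN_congr {c c' : ℕ → RatFunc ℂ} {k : ℕ} (h : ∀ i < k, c i = c' i) :
    opN c k = opN c' k := by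
  apply Finset.sum_congr rfl
  intro i hi
  rw [h i (Finset.mem_range.mp hi)]

lemma opN_pad {c : ℕ → RatFunc ℂ} {k K : ℕ} (hK : k ≤ K) (h : ∀ i, k ≤ i → c i = 0) :
    opN c K = opN c k := by
  symm
  apply Finset.sum_subset (Finset.range_subset_range.mpr hK)
  intro i _ hni
  rw [h i (by simpa using hni), mulOp_zero, zero_mul]

lemma opN_add (c d : ℕ → RatFunc ℂ) (k : ℕ) :
    opN (c + d) k = opN c k + opN d k := by
  rw [opN, opN, opN, ← Finset.sum_add_distrib]
  apply Finset.sum_congr rfl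
  intro i _
  show mulOp (c i + d i) * tauL ^ i = _
  rw [mulOp_add, add_mul]

lemma opN_sub (c d : ℕ → RatFunc ℂ) (k : ℕ) :
    opN (c - d) k = opN c k - opN d k := by
  rw [opN, opN, opN, ← Finset.sum_sub_distrib]
  apply Finset.sum_congr rfl
  intro i _
  show mulOp (c i - d i) * tauL ^ i = _
  rw [mulOp_sub, sub_mul]

/-- Truncation of a coefficient function. -/
def trunc (c : ℕ → RatFunc ℂ) (k : ℕ) : ℕ → RatFunc ℂ := fun i => if i < k then c i else 0

lemma opN_trunc (c : ℕ → RatFunc ℂ) (k : ℕ) : opN (trunc c k) k = opN c k :=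
  opN_congr (fun i hi => by simp [trunc, hi])

/-- Representability as a difference operator. -/
def RepOp (L : Module.End ℂ SeqQ) : Prop := ∃ k c, L = opN c k

lemma rep_zero : RepOp 0 := ⟨0, 0, by simp [opN]⟩

lemma rep_add {A B : Module.End ℂ SeqQ} (hA : RepOp A) (hB : RepOp B) : RepOp (A + B) := by
  obtain ⟨k, c, rfl⟩ := hA
  obtain ⟨l, d, rfl⟩ := hB
  refine ⟨max k l, trunc c k + trunc d l, ?_⟩
  rw [opN_add, opN_pad (le_max_left k l) (fun i hi => by simp only [trunc, if_neg (show ¬ i < k by omega)]),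
    opN_pad (le_max_right k l) (fun i hi => by simp only [trunc, if_neg (show ¬ i < l by omega)]),
    opN_trunc, opN_trunc]

lemma rep_MT (g : RatFunc ℂ) (j : ℕ) : RepOp (mulOp g * tauL ^ j) := by
  refine ⟨j + 1, fun t => if t = j then g else 0, ?_⟩
  rw [opN, Finset.sum_range_succ]
  rw [Finset.sum_eq_zero, if_pos rfl, zero_add]
  intro i hi
  rw [if_neg (by simp at hi; omega), mulOp_zero, zero_mul]

lemma applyOp_eq_opN {k : ℕ} (a : Fin (k + 1) → RatFunc ℂ) :
    applyOp a = opN (fun i => if h : i < k + 1 then a ⟨i, h⟩ else 0) (k + 1) := by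
  rw [applyOp, opN, ← Fin.sum_univ_eq_sum_range
    (fun i => mulOp ((fun i => if h : i < k + 1 then a ⟨i, h⟩ else 0) i) * tauL ^ i)]
  apply Finset.sum_congr rfl
  intro i _
  have hb : (fun i : ℕ => if h : i < k + 1 then a ⟨i, h⟩ else 0) (i : ℕ) = a i := by
    simp only [dif_pos i.isLt, Fin.eta]
  rw [hb]

lemma rep_of_isDiffOp {L : Module.End ℂ SeqQ} (h : IsDiffOp L) : RepOp L := by
  obtain ⟨k, a, rfl⟩ := h
  exact ⟨k + 1, _, applyOp_eq_opN a⟩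

lemma isDiffOp_of_rep {L : Module.End ℂ SeqQ} (h : RepOp L) : IsDiffOp L := by
  obtain ⟨k, c, rfl⟩ := h
  refine ⟨k, fun i => trunc c k i, ?_⟩
  have h1 : applyOp (fun i : Fin (k + 1) => trunc c k i)
      = ∑ i ∈ Finset.range (k + 1), mulOp (trunc c k i) * tauL ^ i :=
    Fin.sum_univ_eq_sum_range (fun i => mulOp (trunc c k i) * tauL ^ i) (k + 1)
  rw [h1]
  show _ = opN (trunc c k) (k + 1)
  rw [opN_pad (Nat.le_succ k)
    (fun i hi => by simp only [trunc, if_neg (show ¬ i < k by omega)]), opN_trunc]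

lemma MgTjB (g : RatFunc ℂ) (j m : ℕ) (b' : ℕ → RatFunc ℂ) :
    mulOp g * tauL ^ j * opN b' (m + 1)
      = opN (fun t => if j ≤ t then g * (sigmaRF^[j] (b' (t - j))) else 0) (j + (m + 1)) := by
  have term : ∀ i : ℕ, mulOp g * tauL ^ j * (mulOp (b' i) * tauL ^ i)
      = mulOp (g * sigmaRF^[j] (b' i)) * tauL ^ (j + i) := by
    intro i
    calc mulOp g * tauL ^ j * (mulOp (b' i) * tauL ^ i)
        = mulOp g * (tauL ^ j * mulOp (b' i)) * tauL ^ i := by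
          rw [mul_assoc, mul_assoc, mul_assoc]
      _ = mulOp g * (mulOp (sigmaRF^[j] (b' i)) * tauL ^ j) * tauL ^ i := by
          rw [tau_pow_mulOp]
      _ = mulOp (g * sigmaRF^[j] (b' i)) * tauL ^ (j + i) := by
          rw [mulOp_mul, pow_add, mul_assoc, mul_assoc, mul_assoc]
  have lhs : mulOp g * tauL ^ j * opN b' (m + 1)
      = ∑ i ∈ Finset.range (m + 1), mulOp (g * sigmaRF^[j] (b' i)) * tauL ^ (j + i) := by
    rw [opN, Finset.mul_sum]
    exact Finset.sum_congr rfl (fun i _ => term i)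
  have rhs : opN (fun t => if j ≤ t then g * (sigmaRF^[j] (b' (t - j))) else 0) (j + (m + 1))
      = ∑ i ∈ Finset.range (m + 1), mulOp (g * sigmaRF^[j] (b' i)) * tauL ^ (j + i) := by
    rw [opN, Finset.range_add,
      Finset.sum_union (Finset.disjoint_range_addLeftEmbedding _ _), Finset.sum_map]
    rw [Finset.sum_eq_zero (fun t ht => by
      rw [if_neg (show ¬ j ≤ t by simp only [Finset.mem_range] at ht; omega),
        mulOp_zero, zero_mul]), zero_add]
    apply Finset.sum_congr rfl
    intro i _
    simp only [addLeftEmbedding_apply]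
    rw [if_pos (Nat.le_add_right j i), Nat.add_sub_cancel_left]
  rw [lhs, rhs]

lemma divB (m : ℕ) (b' : ℕ → RatFunc ℂ) (hbm : b' m ≠ 0) :
    ∀ k (c : ℕ → RatFunc ℂ), ∃ Q r, RepOp Q ∧ opN c k = Q * opN b' (m + 1) + opN r m := by
  intro k
  induction k using Nat.strong_induction_on with
  | _ k IH =>
    intro c
    by_cases hk : k ≤ m
    · refine ⟨0, trunc c k, rep_zero, ?_⟩
      rw [zero_mul, zero_add, ← opN_trunc c k,
        opN_pad hk (fun i hi => by simp only [trunc, if_neg (show ¬ i < k by omega)])]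
    · push_neg at hk
      obtain ⟨k', rfl⟩ : ∃ k', k = k' + 1 := ⟨k - 1, by omega⟩
      have hk' : m ≤ k' := by omega
      set j := k' - m with hj
      have hjm : j + (m + 1) = k' + 1 := by omega
      set g := c k' / sigmaRF^[j] (b' m) with hg
      set e : ℕ → RatFunc ℂ :=
        fun t => if j ≤ t then g * (sigmaRF^[j] (b' (t - j))) else 0 with he
      have hMB : mulOp g * tauL ^ j * opN b' (m + 1) = opN e (k' + 1) := by
        rw [MgTjB, hjm]
      have hek : e k' = c k' := by
        show (if j ≤ k' then g * (sigmaRF^[j] (b' (k' - j))) else 0) = c k'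
        rw [if_pos (by omega), show k' - j = m from by omega, hg,
          div_mul_cancel₀ _ (sigma_iter_ne_zero hbm j)]
      have hsub : opN c (k' + 1) - opN e (k' + 1) = opN (c - e) k' := by
        rw [← opN_sub, opN, Finset.sum_range_succ]
        have : (c - e) k' = 0 := by
          simp [Pi.sub_apply, hek]
        rw [this, mulOp_zero, zero_mul, add_zero]
        rfl
      obtain ⟨Q', r, hQ', hrep⟩ := IH k' (by omega) (c - e)
      refine ⟨mulOp g * tauL ^ j + Q', r, rep_add (rep_MT g j) hQ', ?_⟩
      rw [add_mul, add_assoc, ← hrep, hMB]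
      exact sub_eq_iff_eq_add'.mp hsub

/-- Fundamental solutions of a recurrence. -/
def sol (m N : ℕ) (bv : ℕ → ℕ → ℂ) (s : ℕ) : ℕ → ℂ
  | t =>
    if h : t < N + m then (if t = N + s then 1 else 0)
    else
      -(∑ i ∈ (Finset.range m).attach,
          bv (t - m) i.1 * sol m N bv s (t - m + i.1)) / bv (t - m) m
  decreasing_by
    have hi := Finset.mem_range.mp i.2
    omega

lemma sol_low {m N : ℕ} {bv : ℕ → ℕ → ℂ} {s t : ℕ} (h : t < N + m) :
    sol m N bv s t = if t = N + s then 1 else 0 := by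
  rw [sol]
  rw [dif_pos h]

lemma sol_high {m N : ℕ} {bv : ℕ → ℕ → ℂ} {s t : ℕ} (h : N + m ≤ t) :
    sol m N bv s t
      = -(∑ i ∈ Finset.range m, bv (t - m) i * sol m N bv s (t - m + i)) / bv (t - m) m := by
  rw [sol]
  rw [dif_neg (by omega)]
  congr 2
  exact Finset.sum_attach (Finset.range m) (fun x => bv (t - m) x * sol m N bv s (t - m + x))

lemma sol_rec {m N : ℕ} {bv : ℕ → ℕ → ℂ} {s : ℕ}
    (hbm : ∀ n, N ≤ n → bv n m ≠ 0) {n : ℕ} (hn : N ≤ n) :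
    ∑ i ∈ Finset.range (m + 1), bv n i * sol m N bv s (n + i) = 0 := by
  rw [Finset.sum_range_succ]
  have h1 : sol m N bv s (n + m)
      = -(∑ i ∈ Finset.range m, bv n i * sol m N bv s (n + i)) / bv n m := by
    rw [sol_high (by omega)]
    simp [Nat.add_sub_cancel]
  rw [h1, mul_comm, div_mul_cancel₀ _ (hbm n hn)]
  ring

lemma sum_shift_one {m' : ℕ} (F d : ℕ → ℂ) :
    ∑ i ∈ Finset.range (m' + 1), (if 1 ≤ i then d (i - 1) else 0) * F i
      = ∑ i ∈ Finset.range m', d i * F (i + 1) := by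
  rw [show m' + 1 = 1 + m' from by omega, Finset.range_add,
    Finset.sum_union (Finset.disjoint_range_addLeftEmbedding _ _), Finset.sum_map,
    Finset.sum_range_one, if_neg (by omega), zero_mul, zero_add]
  simp only [addLeftEmbedding_apply]
  apply Finset.sum_congr rfl
  intro i _
  rw [if_pos (by omega), show 1 + i - 1 = i from by omega, show 1 + i = i + 1 from by omega]

lemma indep {m N : ℕ} {bv : ℕ → ℕ → ℂ}
    (hb0 : ∀ n, N ≤ n → bv n 0 ≠ 0) (hbm : ∀ n, N ≤ n → bv n m ≠ 0) :
    ∀ n, N ≤ n → ∀ d : ℕ → ℂ,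
      (∀ s, s < m → ∑ i ∈ Finset.range m, d i * sol m N bv s (n + i) = 0) →
      ∀ i, i < m → d i = 0 := by
  intro n hn
  induction n, hn using Nat.le_induction with
  | base =>
    intro d hd i him
    have h := hd i him
    have hcongr : ∀ j ∈ Finset.range m, d j * sol m N bv i (N + j)
        = if j = i then d j else 0 := by
      intro j hj
      rw [sol_low (by simp only [Finset.mem_range] at hj; omega)]
      by_cases hji : j = i
      · simp [hji]
      · rw [if_neg (by omega), if_neg hji, mul_zero]
    rw [Finset.sum_congr rfl hcongr, Finset.sum_ite_eq' _ i] at h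
    simpa [Finset.mem_range.mpr him] using h
  | succ n hn IH =>
    intro d hd
    rcases Nat.eq_zero_or_pos m with hm0 | hm
    · intro i hi; omega
    obtain ⟨m', hm'⟩ : ∃ m', m = m' + 1 := ⟨m - 1, by omega⟩
    subst hm'
    have hbmn : bv n (m' + 1) ≠ 0 := hbm n hn
    have he : ∀ s, s < m' + 1 →
        ∑ i ∈ Finset.range (m' + 1),
          ((if 1 ≤ i then d (i - 1) else 0) - d m' * bv n i / bv n (m' + 1))
            * sol (m' + 1) N bv s (n + i) = 0 := by
      intro s hs
      have hsolm : sol (m' + 1) N bv s (n + (m' + 1))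
          = -(∑ i ∈ Finset.range (m' + 1), bv n i * sol (m' + 1) N bv s (n + i))
              / bv n (m' + 1) := by
        rw [sol_high (by omega)]
        simp [Nat.add_sub_cancel]
      have hsum : ∑ i ∈ Finset.range (m' + 1), bv n i * sol (m' + 1) N bv s (n + i)
          = -(bv n (m' + 1) * sol (m' + 1) N bv s (n + (m' + 1))) := by
        rw [hsolm]
        field_simp
      have hd' := hd s hs
      rw [Finset.sum_range_succ] at hd'
      have hd'' : ∑ i ∈ Finset.range m', d i * sol (m' + 1) N bv s (n + 1 + i)
          = -(d m' * sol (m' + 1) N bv s (n + 1 + m')) := by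
        linear_combination hd'
      have hnm : n + 1 + m' = n + (m' + 1) := by omega
      calc ∑ i ∈ Finset.range (m' + 1),
            ((if 1 ≤ i then d (i - 1) else 0) - d m' * bv n i / bv n (m' + 1))
              * sol (m' + 1) N bv s (n + i)
          = (∑ i ∈ Finset.range (m' + 1),
              (if 1 ≤ i then d (i - 1) else 0) * sol (m' + 1) N bv s (n + i))
            - (d m' / bv n (m' + 1))
              * ∑ i ∈ Finset.range (m' + 1), bv n i * sol (m' + 1) N bv s (n + i) := by
            rw [Finset.mul_sum, ← Finset.sum_sub_distrib]
            apply Finset.sum_congr rfl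
            intro i _
            ring
        _ = 0 := by
            rw [sum_shift_one (fun i => sol (m' + 1) N bv s (n + i)) d]
            have hcongr2 : ∀ i ∈ Finset.range m',
                d i * sol (m' + 1) N bv s (n + (i + 1))
                  = d i * sol (m' + 1) N bv s (n + 1 + i) := by
              intro i _
              congr 2
              omega
            rw [Finset.sum_congr rfl hcongr2, hd'', hsum, hnm]
            field_simp
            ring
    have hei := IH (fun i => (if 1 ≤ i then d (i - 1) else 0) - d m' * bv n i / bv n (m' + 1)) he
    have hdm1 : d m' = 0 := by
      have h0 := hei 0 (by omega)
      simp only [if_neg (by omega : ¬ (1:ℕ) ≤ 0), zero_sub, neg_eq_zero,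
        _root_.div_eq_zero_iff] at h0
      rcases h0 with h | h
      · rcases mul_eq_zero.mp h with h | h
        · exact h
        · exact absurd h (hb0 n hn)
      · exact absurd h hbmn
    intro i him
    by_cases hil : i = m'
    · rw [hil]; exact hdm1
    · have h1 := hei (i + 1) (by omega)
      simp only [if_pos (by omega : 1 ≤ i + 1), Nat.add_sub_cancel, hdm1, zero_mul,
        zero_div, sub_zero] at h1
      exact h1

lemma opN_zero (k : ℕ) : opN 0 k = 0 := by
  apply Finset.sum_eq_zero
  intro i _
  show mulOp ((0 : ℕ → RatFunc ℂ) i) * tauL ^ i = 0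
  rw [show ((0 : ℕ → RatFunc ℂ) i) = 0 from rfl, mulOp_zero, zero_mul]

lemma rep_neg {A : Module.End ℂ SeqQ} (hA : RepOp A) : RepOp (-A) := by
  obtain ⟨k, c, rfl⟩ := hA
  refine ⟨k, -c, ?_⟩
  rw [show -c = 0 - c from (zero_sub c).symm, opN_sub, opN_zero, zero_sub]

lemma rep_sub {A B : Module.End ℂ SeqQ} (hA : RepOp A) (hB : RepOp B) : RepOp (A - B) := by
  rw [sub_eq_add_neg]
  exact rep_add hA (rep_neg hB)

lemma keyVanish (m : ℕ) (b' c : ℕ → RatFunc ℂ) (hb0 : b' 0 ≠ 0) (hbm : b' m ≠ 0)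
    (hker : ∀ u : CSeq, opN b' (m + 1) (mkq u) = 0 → opN c m (mkq u) = 0) :
    ∀ i, i < m → c i = 0 := by
  set P : Polynomial ℂ := ((b' 0).num * (b' m).num *
    (∏ i ∈ Finset.range (m + 1), (b' i).denom)) * (∏ i ∈ Finset.range m, (c i).denom)
    with hP
  have hPne : P ≠ 0 := by
    refine mul_ne_zero (mul_ne_zero (mul_ne_zero ?_ ?_) ?_) ?_
    · exact RatFunc.num_ne_zero hb0
    · exact RatFunc.num_ne_zero hbm
    · exact Finset.prod_ne_zero_iff.mpr (fun i _ => (b' i).denom_ne_zero)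
    · exact Finset.prod_ne_zero_iff.mpr (fun i _ => (c i).denom_ne_zero)
  obtain ⟨N, hN⟩ := eventually_atTop.mp (eventually_poly_ne hPne)
  have hfac : ∀ n, N ≤ n →
      (b' 0).num.eval (n : ℂ) ≠ 0 ∧ (b' m).num.eval (n : ℂ) ≠ 0 ∧
      (∀ i, i < m + 1 → (b' i).denom.eval (n : ℂ) ≠ 0) ∧
      (∀ i, i < m → (c i).denom.eval (n : ℂ) ≠ 0) := by
    intro n hn
    have hPn := hN n hn
    rw [hP] at hPn
    simp only [Polynomial.eval_mul, Polynomial.eval_prod, mul_ne_zero_iff,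
      Finset.prod_ne_zero_iff] at hPn
    obtain ⟨⟨⟨h1, h2⟩, h3⟩, h4⟩ := hPn
    exact ⟨h1, h2, fun i hi => h3 i (Finset.mem_range.mpr hi),
      fun i hi => h4 i (Finset.mem_range.mpr hi)⟩
  set bv : ℕ → ℕ → ℂ := fun n i => evalRF (b' i) n with hbv
  have hb0n : ∀ n, N ≤ n → bv n 0 ≠ 0 := by
    intro n hn
    obtain ⟨h1, _, h3, _⟩ := hfac n hn
    rw [hbv]
    exact div_ne_zero h1 (h3 0 (by omega))
  have hbmn : ∀ n, N ≤ n → bv n m ≠ 0 := by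
    intro n hn
    obtain ⟨_, h2, h3, _⟩ := hfac n hn
    rw [hbv]
    exact div_ne_zero h2 (h3 m (by omega))
  have hsol : ∀ s : ℕ, opN b' (m + 1) (mkq (sol m N bv s)) = 0 := by
    intro s
    rw [opN_apply]
    apply mk_eq_zero_of_eventually
    filter_upwards [eventually_ge_atTop N] with n hn
    exact sol_rec hbmn hn
  have hkill : ∀ s : ℕ, ∃ M, ∀ n, M ≤ n →
      ∑ i ∈ Finset.range m, evalRF (c i) n * sol m N bv s (n + i) = 0 := by
    intro s
    have h0 := hker _ (hsol s)
    rw [opN_apply] at h0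
    have hfin : (Function.support
        (fun n => ∑ i ∈ Finset.range m, evalRF (c i) n * sol m N bv s (n + i))).Finite :=
      Ideal.Quotient.eq_zero_iff_mem.mp h0
    obtain ⟨M, hM⟩ := hfin.bddAbove
    refine ⟨M + 1, fun n hn => ?_⟩
    by_contra hc
    have hmem : n ∈ Function.support
        (fun n => ∑ i ∈ Finset.range m, evalRF (c i) n * sol m N bv s (n + i)) := hc
    have := hM hmem
    omega
  choose Mf hMf using hkill
  have hvanish : ∀ n, N + (Finset.range m).sup Mf ≤ n → ∀ i, i < m → evalRF (c i) n = 0 := by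
    intro n hn
    refine indep hb0n hbmn n (by omega) (fun i => evalRF (c i) n) ?_
    intro s hs
    exact hMf s n (le_trans (le_trans (Finset.le_sup (Finset.mem_range.mpr hs))
      (Nat.le_add_left _ _)) hn)
  intro i him
  by_contra hci
  have hnum : (c i).num ≠ 0 := RatFunc.num_ne_zero hci
  obtain ⟨N2, hN2⟩ := eventually_atTop.mp (eventually_poly_ne hnum)
  set n := N + (Finset.range m).sup Mf + N2 with hn
  have h1 := hvanish n (by omega) i him
  rw [evalRF_def, _root_.div_eq_zero_iff] at h1
  rcases h1 with h | h
  · exact hN2 n (by omega) h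
  · exact (hfac n (by omega)).2.2.2 i him h

/-- the map `Ψ : Hom_D(D/DL₁, D/DL₂) → Hom_ℂ(V(L₂), V(L₁))` is well
defined and injective.  A homomorphism `D/DL₁ → D/DL₂` is given by an operator `G`
with `L₁G ∈ DL₂`; well-definedness says `G` maps `V(L₂)` into `V(L₁)`, and
injectivity says that if two such operators agree on `V(L₂)` then they are
congruent mod `DL₂` (so induce the same homomorphism). -/
theorem stmt4 (n m : ℕ)
    (a : Fin (n + 1) → RatFunc ℂ) (b : Fin (m + 1) → RatFunc ℂ)
    (ha0 : a 0 ≠ 0) (han : a (Fin.last n) ≠ 0)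
    (hb0 : b 0 ≠ 0) (hbm : b (Fin.last m) ≠ 0)
    (G G' : Module.End ℂ SeqQ) (hG : IsDiffOp G) (hG' : IsDiffOp G')
    (hhom : ∃ Q : Module.End ℂ SeqQ, IsDiffOp Q ∧ applyOp a * G = Q * applyOp b)
    (hhom' : ∃ Q : Module.End ℂ SeqQ, IsDiffOp Q ∧ applyOp a * G' = Q * applyOp b) :
    (∀ u ∈ LinearMap.ker (applyOp b), G u ∈ LinearMap.ker (applyOp a)) ∧
    ((∀ u ∈ LinearMap.ker (applyOp b), G u = G' u) →
      ∃ Q : Module.End ℂ SeqQ, IsDiffOp Q ∧ G - G' = Q * applyOp b) := by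
  constructor
  · intro u hu
    obtain ⟨Q, hQ, hcomm⟩ := hhom
    rw [LinearMap.mem_ker] at hu ⊢
    have h1 : (applyOp a * G) u = (Q * applyOp b) u := by rw [hcomm]
    rw [Module.End.mul_apply, Module.End.mul_apply, hu, map_zero] at h1
    exact h1
  · intro hagree
    have hH : RepOp (G - G') := rep_sub (rep_of_isDiffOp hG) (rep_of_isDiffOp hG')
    obtain ⟨K, h, hHrep⟩ := hH
    have hBeq : applyOp b = opN (fun i => if hi : i < m + 1 then b ⟨i, hi⟩ else 0) (m + 1) :=
      applyOp_eq_opN b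
    set bR : ℕ → RatFunc ℂ := fun i => if hi : i < m + 1 then b ⟨i, hi⟩ else 0 with hbR
    have hbRm : bR m ≠ 0 := by
      rw [hbR]
      simp only [dif_pos (Nat.lt_succ_self m)]
      convert hbm using 2; ext; simp
    have hbR0 : bR 0 ≠ 0 := by
      rw [hbR]
      simp only [dif_pos (Nat.succ_pos m)]
      convert hb0 using 2; ext; simp
    obtain ⟨Q, r, hQrep, hdiv⟩ := divB m bR hbRm K h
    have hHB : G - G' = Q * applyOp b + opN r m := by
      rw [hHrep, hdiv, hBeq]
    have hkerR : ∀ u : CSeq, opN bR (m + 1) ((Ideal.Quotient.mk finIdeal) u) = 0 →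
        opN r m ((Ideal.Quotient.mk finIdeal) u) = 0 := by
      intro u hu
      have hu' : (Ideal.Quotient.mk finIdeal) u ∈ LinearMap.ker (applyOp b) := by
        rw [LinearMap.mem_ker, hBeq]
        exact hu
      have h1 : (G - G') ((Ideal.Quotient.mk finIdeal) u) = 0 := by
        rw [LinearMap.sub_apply, hagree _ hu', sub_self]
      have h2 : (Q * applyOp b) ((Ideal.Quotient.mk finIdeal) u) = 0 := by
        rw [Module.End.mul_apply, LinearMap.mem_ker.mp hu', map_zero]
      have h3 := congrArg (fun L : Module.End ℂ SeqQ => L ((Ideal.Quotient.mk finIdeal) u)) hHB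
      simp only [LinearMap.add_apply] at h3
      rw [h1, h2, zero_add] at h3
      exact h3.symm
    have hr0 := keyVanish m bR r hbR0 hbRm hkerR
    have hR0 : opN r m = 0 := by
      apply Finset.sum_eq_zero
      intro i hi
      rw [hr0 i (Finset.mem_range.mp hi), mulOp_zero, zero_mul]
    refine ⟨Q, isDiffOp_of_rep hQrep, ?_⟩
    rw [hHB, hR0, add_zero]
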